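/- arXiv:1911.10664 — 3 statements merged into one kernel-verified Lean document; each statement's English description precedes it below -/
import Mathlib

section
/- Let $N\ge 1$, $W\in\mathbb{R}^{N\times N}$ symmetric, $b:A\times\mathbb{R}\to\mathbb{R}$ Lipschitz in the sense that $|b(\alpha,z)-b(\alpha',z')|^2\le c_\alpha|\alpha-\alpha'|^2+c_z|z-z'|^2$, and $\xi_1,\dots,\xi_N$ square-integrable random variables. If $\sqrt{c_z}\,\|W\|_F<1$ (with $\|W\|_F^2=\frac{1}{N^2}\sum_{i,j}W_{i,j}^2$), then for any strategy profile $\boldsymbol{\alpha}\in A^N$ there exists a unique $\mathbf{z}\in L^2(\Omega;\mathbb{R}^N)$ satisfying $z_i=\frac{1}{N}\sum_{j=1}^N W_{i,j}\,(b(\alpha_j,z_j)+\xi_j)$ for all $i$. -/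
open MeasureTheory Finset


-- helper: x ≤ y from squares
private lemma le_of_sq_le_sq' {x y : ℝ} (hx : 0 ≤ x) (hy : 0 ≤ y) (h : x ^ 2 ≤ y ^ 2) :
    x ≤ y := by nlinarith

-- coeFn of a finset sum in Lp
private lemma coeFn_finset_sum {Ω : Type*} [MeasurableSpace Ω] {P : Measure Ω} {ι : Type*}
    (s : Finset ι) (g : ι → Lp ℝ 2 P) :
    (↑(∑ j ∈ s, g j) : Ω → ℝ) =ᵐ[P] fun ω => ∑ j ∈ s, (g j : Ω → ℝ) ω := by
  induction s using Finset.cons_induction with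
  | empty => simp only [Finset.sum_empty]; exact Lp.coeFn_zero (E := ℝ) (p := 2) (μ := P)
  | cons a s ha ih =>
    simp only [Finset.sum_cons]
    filter_upwards [Lp.coeFn_add (g a) (∑ j ∈ s, g j), ih] with ω h1 h2
    rw [h1, Pi.add_apply, h2]

namespace FPAgg

variable {Ω : Type*} [MeasurableSpace Ω] {P : Measure Ω} [IsProbabilityMeasure P]
    {N : ℕ} {b : ℝ → ℝ → ℝ} {cz : ℝ} {α : Fin N → ℝ}

/-- the Nemytskii operator -/
noncomputable def Bop
    (hblip : ∀ j : Fin N, LipschitzWith (Real.toNNReal (Real.sqrt cz))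
      (fun t => b (α j) t - b (α j) 0)) (j : Fin N) (f : Lp ℝ 2 P) : Lp ℝ 2 P :=
  (hblip j).compLp (sub_self _) f + MemLp.toLp (fun _ => b (α j) 0) (memLp_const _)

lemma Bop_coe (hblip : ∀ j : Fin N, LipschitzWith (Real.toNNReal (Real.sqrt cz))
      (fun t => b (α j) t - b (α j) 0)) (j : Fin N) (f : Lp ℝ 2 P) :
    (Bop hblip j f : Ω → ℝ) =ᵐ[P] fun ω => b (α j) (f ω) := by
  filter_upwards [Lp.coeFn_add ((hblip j).compLp (sub_self _) f)
      (MemLp.toLp (fun _ => b (α j) 0) (memLp_const _)),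
    LipschitzWith.coeFn_compLp (hblip j) (sub_self _) f,
    MemLp.coeFn_toLp (memLp_const (b (α j) 0) (μ := P) (p := 2))] with ω h1 h2 h3
  show (Bop hblip j f : Ω → ℝ) ω = _
  rw [Bop, h1, Pi.add_apply, h2, h3]
  show (b (α j) (f ω) - b (α j) 0) + b (α j) 0 = _
  ring

lemma Bop_sub_norm (hblip : ∀ j : Fin N, LipschitzWith (Real.toNNReal (Real.sqrt cz))
      (fun t => b (α j) t - b (α j) 0)) (j : Fin N) (f f' : Lp ℝ 2 P) :
    ‖Bop hblip j f - Bop hblip j f'‖ ≤ Real.sqrt cz * ‖f - f'‖ := by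
  have h := LipschitzWith.norm_compLp_sub_le (hblip j) (sub_self _) f f'
  rw [Real.coe_toNNReal _ (Real.sqrt_nonneg _)] at h
  simpa [Bop, add_sub_add_right_eq_sub] using h

/-- the fixed point map -/
noncomputable def Tmap (W : Matrix (Fin N) (Fin N) ℝ) {ξ : Fin N → Ω → ℝ}
    (hξ : ∀ i, MemLp (ξ i) 2 P)
    (hblip : ∀ j : Fin N, LipschitzWith (Real.toNNReal (Real.sqrt cz))
      (fun t => b (α j) t - b (α j) 0))
    (z : PiLp 2 (fun _ : Fin N => Lp ℝ 2 P)) :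
    PiLp 2 (fun _ : Fin N => Lp ℝ 2 P) :=
  WithLp.toLp 2 (fun i => (1 / (N : ℝ)) • ∑ j, W i j • (Bop hblip j (z j) + MemLp.toLp (ξ j) (hξ j)))

lemma Tmap_coe (W : Matrix (Fin N) (Fin N) ℝ) {ξ : Fin N → Ω → ℝ}
    (hξ : ∀ i, MemLp (ξ i) 2 P)
    (hblip : ∀ j : Fin N, LipschitzWith (Real.toNNReal (Real.sqrt cz))
      (fun t => b (α j) t - b (α j) 0))
    (z : PiLp 2 (fun _ : Fin N => Lp ℝ 2 P)) (i : Fin N) :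
    (Tmap W hξ hblip z i : Ω → ℝ) =ᵐ[P]
      fun ω => (1 / (N : ℝ)) * ∑ j, W i j * (b (α j) ((z j : Ω → ℝ) ω) + ξ j ω) := by
  have hj : ∀ᵐ ω ∂P, ∀ j : Fin N,
      ((W i j • (Bop hblip j (z j) + MemLp.toLp (ξ j) (hξ j)) : Lp ℝ 2 P) : Ω → ℝ) ω
        = W i j * (b (α j) ((z j : Ω → ℝ) ω) + ξ j ω) := by
    rw [ae_all_iff]
    intro j
    filter_upwards [Lp.coeFn_smul (W i j) (Bop hblip j (z j) + MemLp.toLp (ξ j) (hξ j)),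
      Lp.coeFn_add (Bop hblip j (z j)) (MemLp.toLp (ξ j) (hξ j)),
      Bop_coe hblip j (z j),
      MemLp.coeFn_toLp (hξ j)] with ω h1 h2 h3 h4
    rw [h1, Pi.smul_apply, h2, Pi.add_apply, h3, h4, smul_eq_mul]
  filter_upwards [Lp.coeFn_smul ((1 : ℝ) / N)
      (∑ j, W i j • (Bop hblip j (z j) + MemLp.toLp (ξ j) (hξ j))),
    coeFn_finset_sum Finset.univ
      (fun j => W i j • (Bop hblip j (z j) + MemLp.toLp (ξ j) (hξ j))),
    hj] with ω h1 h2 h3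
  show ((((1 : ℝ) / N) • _ : Lp ℝ 2 P) : Ω → ℝ) ω = _
  rw [h1, Pi.smul_apply, h2, smul_eq_mul]
  exact congrArg _ (Finset.sum_congr rfl fun j _ => h3 j)

end FPAgg

namespace FPAgg

lemma Tmap_lip {Ω : Type*} [MeasurableSpace Ω] {P : Measure Ω} [IsProbabilityMeasure P]
    {N : ℕ} {b : ℝ → ℝ → ℝ} {cz : ℝ} {α : Fin N → ℝ} (hcz : 0 ≤ cz)
    (W : Matrix (Fin N) (Fin N) ℝ) {ξ : Fin N → Ω → ℝ}
    (hξ : ∀ i, MemLp (ξ i) 2 P)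
    (hblip : ∀ j : Fin N, LipschitzWith (Real.toNNReal (Real.sqrt cz))
      (fun t => b (α j) t - b (α j) 0))
    (x y : PiLp 2 (fun _ : Fin N => Lp ℝ 2 P)) :
    ‖Tmap W hξ hblip x - Tmap W hξ hblip y‖ ≤
      (Real.sqrt cz * Real.sqrt ((1 / (N : ℝ) ^ 2) * ∑ i, ∑ j, W i j ^ 2)) * ‖x - y‖ := by
  set S : ℝ := (1 / (N : ℝ) ^ 2) * ∑ i, ∑ j, W i j ^ 2 with hS
  have hS0 : 0 ≤ S := by positivity
  set u : Fin N → ℝ := fun j => ‖x j - y j‖ with hu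
  have hA : ∀ i, ‖(Tmap W hξ hblip x - Tmap W hξ hblip y) i‖
      ≤ (1 / (N : ℝ)) * ∑ j, |W i j| * (Real.sqrt cz * u j) := by
    intro i
    rw [PiLp.sub_apply]
    have hrw : Tmap W hξ hblip x i - Tmap W hξ hblip y i
        = (1 / (N : ℝ)) • ∑ j, W i j • (Bop hblip j (x j) - Bop hblip j (y j)) := by
      rw [Tmap, Tmap, PiLp.toLp_apply, PiLp.toLp_apply, ← smul_sub, ← Finset.sum_sub_distrib]
      congr 1
      refine Finset.sum_congr rfl fun j _ => ?_
      rw [← smul_sub, add_sub_add_right_eq_sub]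
    rw [hrw, norm_smul, Real.norm_eq_abs, abs_of_nonneg (by positivity)]
    refine mul_le_mul_of_nonneg_left ?_ (by positivity)
    refine (norm_sum_le _ _).trans (Finset.sum_le_sum fun j _ => ?_)
    rw [norm_smul, Real.norm_eq_abs]
    exact mul_le_mul_of_nonneg_left (Bop_sub_norm hblip j (x j) (y j)) (abs_nonneg _)
  have hB : ∀ i, ‖(Tmap W hξ hblip x - Tmap W hξ hblip y) i‖ ^ 2
      ≤ (1 / (N : ℝ) ^ 2) * ((∑ j, W i j ^ 2) * (cz * ∑ j, u j ^ 2)) := by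
    intro i
    have h1 := pow_le_pow_left₀ (norm_nonneg _) (hA i) 2
    refine h1.trans ?_
    rw [mul_pow]
    have hCS := Finset.sum_mul_sq_le_sq_mul_sq Finset.univ
      (fun j => |W i j|) (fun j => Real.sqrt cz * u j)
    have e1 : (∑ j, |W i j| ^ 2) = ∑ j, W i j ^ 2 := by simp [sq_abs]
    have e2 : (∑ j, (Real.sqrt cz * u j) ^ 2) = cz * ∑ j, u j ^ 2 := by
      rw [Finset.mul_sum]
      refine Finset.sum_congr rfl fun j _ => ?_
      rw [mul_pow, Real.sq_sqrt hcz]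
    rw [e1, e2] at hCS
    have e3 : ((1 : ℝ) / N) ^ 2 = 1 / (N : ℝ) ^ 2 := by ring
    rw [e3]
    exact mul_le_mul_of_nonneg_left hCS (by positivity)
  have hnormsq : ‖x - y‖ ^ 2 = ∑ j, u j ^ 2 := by
    rw [PiLp.norm_sq_eq_of_L2]
    exact Finset.sum_congr rfl fun j _ => by rw [hu, PiLp.sub_apply]
  have hmain : ‖Tmap W hξ hblip x - Tmap W hξ hblip y‖ ^ 2
      ≤ (cz * S) * ‖x - y‖ ^ 2 := by
    rw [PiLp.norm_sq_eq_of_L2, hnormsq]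
    calc ∑ i, ‖(Tmap W hξ hblip x - Tmap W hξ hblip y) i‖ ^ 2
        ≤ ∑ i, (1 / (N : ℝ) ^ 2) * ((∑ j, W i j ^ 2) * (cz * ∑ j, u j ^ 2)) :=
          Finset.sum_le_sum fun i _ => hB i
      _ = (cz * S) * ∑ j, u j ^ 2 := by
          rw [hS, ← Finset.mul_sum, ← Finset.sum_mul]; ring
  refine le_of_sq_le_sq' (norm_nonneg _) (by positivity) ?_
  calc ‖Tmap W hξ hblip x - Tmap W hξ hblip y‖ ^ 2 ≤ (cz * S) * ‖x - y‖ ^ 2 := hmain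
    _ = (Real.sqrt cz * Real.sqrt S * ‖x - y‖) ^ 2 := by
        rw [mul_pow, mul_pow, Real.sq_sqrt hcz, Real.sq_sqrt hS0]

end FPAgg

/-- Existence and uniqueness of the random aggregate in the `N`-player network game. -/
theorem finite_player_aggregate_exists_unique
    {Ω : Type*} [MeasurableSpace Ω] (P : Measure Ω) [IsProbabilityMeasure P]
    (N : ℕ) (hN : 1 ≤ N) (W : Matrix (Fin N) (Fin N) ℝ) (hWsymm : W.IsSymm)
    (A : Set ℝ) (hAclosed : IsClosed A) (hAconv : Convex ℝ A)
    (b : ℝ → ℝ → ℝ) (cα cz : ℝ)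
    (hb : ∀ α α' z z' : ℝ,
      |b α z - b α' z'| ^ 2 ≤ cα * |α - α'| ^ 2 + cz * |z - z'| ^ 2)
    (ξ : Fin N → Ω → ℝ) (hξ : ∀ i, MemLp (ξ i) 2 P)
    (hWF : Real.sqrt cz *
      Real.sqrt ((1 / (N : ℝ) ^ 2) * ∑ i, ∑ j, W i j ^ 2) < 1)
    (α : Fin N → ℝ) (hα : ∀ i, α i ∈ A) :
    ∃ z : Ω → Fin N → ℝ,
      (∀ i, MemLp (fun ω => z ω i) 2 P) ∧
      (∀ᵐ ω ∂P, ∀ i,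
        z ω i = (1 / (N : ℝ)) * ∑ j, W i j * (b (α j) (z ω j) + ξ j ω)) ∧
      ∀ z' : Ω → Fin N → ℝ,
        (∀ i, MemLp (fun ω => z' ω i) 2 P) →
        (∀ᵐ ω ∂P, ∀ i,
          z' ω i = (1 / (N : ℝ)) * ∑ j, W i j * (b (α j) (z' ω j) + ξ j ω)) →
        ∀ i, (fun ω => z' ω i) =ᵐ[P] fun ω => z ω i := by
  classical
  -- nonnegativity of `cz`
  have hcz : 0 ≤ cz := by
    have h := hb 0 0 0 1
    simp only [sub_self, abs_zero, sub_zero, zero_sub, abs_neg, abs_one, one_pow, mul_zero,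
      mul_one, zero_add, ne_eq, OfNat.ofNat_ne_zero, not_false_eq_true, zero_pow] at h
    exact le_trans (by positivity) h
  -- Lipschitz property of `b` in the second argument
  have hblip : ∀ j : Fin N, LipschitzWith (Real.toNNReal (Real.sqrt cz))
      (fun t => b (α j) t - b (α j) 0) := by
    intro j
    refine LipschitzWith.of_dist_le_mul fun s t => ?_
    rw [Real.dist_eq, Real.dist_eq, Real.coe_toNNReal _ (Real.sqrt_nonneg _)]
    have h1 : (b (α j) s - b (α j) 0) - (b (α j) t - b (α j) 0) = b (α j) s - b (α j) t := by
      ring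
    rw [h1]
    have h := hb (α j) (α j) s t
    simp only [sub_self, abs_zero, ne_eq, OfNat.ofNat_ne_zero, not_false_eq_true, zero_pow,
      mul_zero, zero_add] at h
    refine le_of_sq_le_sq' (abs_nonneg _) (by positivity) ?_
    rw [mul_pow, Real.sq_sqrt hcz]
    exact h
  set S : ℝ := (1 / (N : ℝ) ^ 2) * ∑ i, ∑ j, W i j ^ 2 with hS
  have hS0 : 0 ≤ S := by positivity
  haveI : Nonempty (PiLp 2 (fun _ : Fin N => Lp ℝ 2 P)) := ⟨0⟩
  haveI : CompleteSpace (PiLp 2 (fun _ : Fin N => Lp ℝ 2 P)) := by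
    infer_instance
  set K : NNReal := Real.toNNReal (Real.sqrt cz * Real.sqrt S) with hK
  have hKcoe : (K : ℝ) = Real.sqrt cz * Real.sqrt S :=
    Real.coe_toNNReal _ (by positivity)
  have hKlt : K < 1 := by
    rw [hK, ← Real.toNNReal_one]
    exact Real.toNNReal_lt_toNNReal_iff'.mpr ⟨hWF, one_pos⟩
  have hCon : ContractingWith K (FPAgg.Tmap W hξ hblip) := by
    refine ⟨hKlt, LipschitzWith.of_dist_le_mul fun x y => ?_⟩
    rw [dist_eq_norm, dist_eq_norm, hKcoe]
    exact FPAgg.Tmap_lip hcz W hξ hblip x y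
  set zfix := hCon.fixedPoint (FPAgg.Tmap W hξ hblip) with hzfix
  have hfix : FPAgg.Tmap W hξ hblip zfix = zfix := hCon.fixedPoint_isFixedPt
  refine ⟨fun ω i => (zfix i : Ω → ℝ) ω, fun i => Lp.memLp (zfix i), ?_, ?_⟩
  · rw [ae_all_iff]
    intro i
    have h := FPAgg.Tmap_coe W hξ hblip zfix i
    rw [hfix] at h
    exact h
  · intro z' hmem' heq' i
    set y : PiLp 2 (fun _ : Fin N => Lp ℝ 2 P) :=
      WithLp.toLp 2 (fun i => MemLp.toLp (fun ω => z' ω i) (hmem' i)) with hy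
    have hycoe : ∀ j, (y j : Ω → ℝ) =ᵐ[P] fun ω => z' ω j :=
      fun j => MemLp.coeFn_toLp (hmem' j)
    have hyfix : FPAgg.Tmap W hξ hblip y = y := by
      refine PiLp.ext fun k => ?_
      refine Lp.ext ?_
      have hall : ∀ᵐ ω ∂P, ∀ j, (y j : Ω → ℝ) ω = z' ω j := ae_all_iff.mpr hycoe
      filter_upwards [FPAgg.Tmap_coe W hξ hblip y k, hall, heq', hycoe k]
        with ω h1 h2 h3 h4
      rw [h1, h4, h3 k]
      exact congrArg _ (Finset.sum_congr rfl fun j _ => by rw [h2 j])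
    have hyz : y = zfix := hCon.fixedPoint_unique hyfix
    have := hycoe i
    rw [hyz] at this
    exact this.symm.trans (by rfl)
end

section
/- Let $\gamma\in(0,1/3)$, $w(x,y)=(xy)^{-\gamma}$, and $\theta\in\mathbb{R}$ with $|\theta|<1-2\gamma$. Then $\big[(\mathbf{I}-\theta\mathbf{W})^{-1}\mathbf{1}\big]_x=1+\frac{\theta(1-2\gamma)}{(1-\gamma)(1-2\gamma-\theta)}\,x^{-\gamma}$. In particular (with $\theta=1/3$), the unique Nash equilibrium of the beach graphon game on the power-law graphon is $\hat\alpha_x=\frac{1}{3}+\frac{1-2\gamma}{6(1-\gamma)(1-3\gamma)}\,x^{-\gamma}$. -/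
open MeasureTheory Set

lemma integrable_rpow_Icc (r : ℝ) (hr : -1 < r) :
    IntegrableOn (fun y : ℝ => y ^ r) (Set.Icc (0:ℝ) 1) := by
  rw [integrableOn_Icc_iff_integrableOn_Ioc]
  exact (intervalIntegral.intervalIntegrable_rpow' hr).1

lemma integral_rpow_Icc (r : ℝ) (hr : -1 < r) :
    ∫ y in Set.Icc (0:ℝ) 1, y ^ r = 1 / (r + 1) := by
  rw [MeasureTheory.integral_Icc_eq_integral_Ioc,
    ← intervalIntegral.integral_of_le (zero_le_one),
    integral_rpow (Or.inl hr)]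
  rw [Real.one_rpow, Real.zero_rpow (by linarith)]
  ring

lemma key_integral (γ : ℝ) (hγ0 : 0 < γ) (hγ : γ < 1/2) (x a b : ℝ) (hx : 0 ≤ x) :
    ∫ y in Set.Icc (0:ℝ) 1, (x * y) ^ (-γ) * (a + b * y ^ (-γ)) =
      x ^ (-γ) * (a / (1 - γ) + b / (1 - 2 * γ)) := by
  have h1 : -1 < -γ := by linarith
  have h2 : -1 < -γ + -γ := by linarith
  have hrw : ∀ y ∈ Set.Icc (0:ℝ) 1,
      (x * y) ^ (-γ) * (a + b * y ^ (-γ)) =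
        x ^ (-γ) * ((a * y ^ (-γ)) + b * y ^ (-γ + -γ)) := by
    intro y hy
    rw [Real.mul_rpow hx hy.1, Real.rpow_add' hy.1 (by linarith)]
    ring
  rw [setIntegral_congr_fun measurableSet_Icc hrw, MeasureTheory.integral_const_mul,
    integral_add ((integrable_rpow_Icc _ h1).const_mul a)
      ((integrable_rpow_Icc _ h2).const_mul b),
    MeasureTheory.integral_const_mul, MeasureTheory.integral_const_mul, integral_rpow_Icc _ h1,
    integral_rpow_Icc _ h2]
  ring_nf

/-- Resolvent of the power-law graphon applied to `1`, and the explicit Nash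
equilibrium of the beach graphon game on the power-law graphon. -/
theorem power_law_graphon_resolvent_and_nash
    (γ θ : ℝ) (hγ0 : 0 < γ) (hγ : γ < 1 / 3) (hθ : |θ| < 1 - 2 * γ) :
    -- `(I - θW)⁻¹ 1` is the function `x ↦ 1 + θ(1-2γ)/((1-γ)(1-2γ-θ)) x^{-γ}`,
    -- i.e. it satisfies `f = 1 + θ W f`:
    (∀ x ∈ Set.Ioc (0:ℝ) 1,
      (1 + (θ * (1 - 2 * γ)) / ((1 - γ) * (1 - 2 * γ - θ)) * x ^ (-γ)) =
        1 + θ * ∫ y in Set.Icc (0:ℝ) 1, (x * y) ^ (-γ) *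
          (1 + (θ * (1 - 2 * γ)) / ((1 - γ) * (1 - 2 * γ - θ)) * y ^ (-γ))) ∧
    -- with `θ = 1/3`, the unique Nash equilibrium of the beach graphon game:
    ((∀ x ∈ Set.Ioc (0:ℝ) 1,
      (1 / 3 + (1 - 2 * γ) / (6 * (1 - γ) * (1 - 3 * γ)) * x ^ (-γ)) =
        (1 / 3) * (1 + ∫ y in Set.Icc (0:ℝ) 1, (x * y) ^ (-γ) *
          (1 / 3 + (1 - 2 * γ) / (6 * (1 - γ) * (1 - 3 * γ)) * y ^ (-γ)))) ∧
      ∀ α' : ℝ → ℝ,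
        MemLp α' 2 (volume.restrict (Set.Icc (0:ℝ) 1)) →
        (∀ᵐ x ∂(volume.restrict (Set.Icc (0:ℝ) 1)),
          α' x = (1 / 3) * (1 + ∫ y in Set.Icc (0:ℝ) 1,
            (x * y) ^ (-γ) * α' y)) →
        α' =ᵐ[volume.restrict (Set.Icc (0:ℝ) 1)] fun x =>
          1 / 3 + (1 - 2 * γ) / (6 * (1 - γ) * (1 - 3 * γ)) * x ^ (-γ)) := by
  have hγ2 : γ < 1 / 2 := by linarith
  have hg1 : (1:ℝ) - γ ≠ 0 := by intro h; nlinarith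
  have hg2 : (1:ℝ) - 2 * γ ≠ 0 := by intro h; nlinarith
  have hg3 : (1:ℝ) - 3 * γ ≠ 0 := by intro h; nlinarith
  have hgθ : (1:ℝ) - 2 * γ - θ ≠ 0 := by
    have := (abs_lt.1 hθ).2; intro h; linarith
  refine ⟨?_, ?_, ?_⟩
  · intro x hx
    rw [key_integral γ hγ0 hγ2 x 1 _ hx.1.le]
    field_simp
    ring
  · intro x hx
    rw [key_integral γ hγ0 hγ2 x (1/3) _ hx.1.le]
    field_simp
    ring
  · intro α' _ hfp
    set d : ℝ := ∫ y in Set.Icc (0:ℝ) 1, y ^ (-γ) * α' y with hd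
    -- Step A: a.e. α' x = 1/3 + (d/3) x^{-γ}
    have hmem : ∀ᵐ x ∂(volume.restrict (Set.Icc (0:ℝ) 1)), x ∈ Set.Icc (0:ℝ) 1 :=
      ae_restrict_mem measurableSet_Icc
    have stepA : ∀ᵐ x ∂(volume.restrict (Set.Icc (0:ℝ) 1)),
        α' x = 1 / 3 + (d / 3) * x ^ (-γ) := by
      filter_upwards [hfp, hmem] with x heq hx
      have hint : ∫ y in Set.Icc (0:ℝ) 1, (x * y) ^ (-γ) * α' y
          = x ^ (-γ) * d := by
        rw [hd, ← MeasureTheory.integral_const_mul]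
        refine setIntegral_congr_fun measurableSet_Icc fun y hy => ?_
        rw [Real.mul_rpow hx.1 hy.1]; ring
      rw [heq, hint]; ring
    -- Step B: identify d
    have h1 : -1 < -γ := by linarith
    have h2 : -1 < -γ + -γ := by linarith
    have hdval : d = (1 - 2 * γ) / (2 * (1 - γ) * (1 - 3 * γ)) := by
      have hcong : d = ∫ y in Set.Icc (0:ℝ) 1,
          y ^ (-γ) * (1 / 3 + (d / 3) * y ^ (-γ)) := by
        rw [hd]
        refine integral_congr_ae ?_
        filter_upwards [stepA] with y hy
        rw [hy]
      have hcong2 : (∫ y in Set.Icc (0:ℝ) 1,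
            y ^ (-γ) * (1 / 3 + (d / 3) * y ^ (-γ)))
          = ∫ y in Set.Icc (0:ℝ) 1,
            ((1/3) * y ^ (-γ) + (d/3) * y ^ (-γ + -γ)) := by
        refine setIntegral_congr_fun measurableSet_Icc fun y hy => ?_
        rw [Real.rpow_add' hy.1 (by linarith)]
        ring
      rw [hcong2, integral_add ((integrable_rpow_Icc _ h1).const_mul _)
          ((integrable_rpow_Icc _ h2).const_mul _),
        MeasureTheory.integral_const_mul, MeasureTheory.integral_const_mul,
        integral_rpow_Icc _ h1, integral_rpow_Icc _ h2] at hcong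
      have hne1 : -γ + 1 ≠ 0 := by intro h; linarith
      have hne2 : -γ + -γ + 1 ≠ 0 := by intro h; nlinarith
      field_simp at hcong ⊢
      have hne3 : γ * (-1 + -1) + 1 ≠ 0 := by intro h; linarith
      have hc : d * 3 * (-γ + 1) * (γ * (-1 + -1) + 1) = (γ * (-1 + -1) + 1) + d * (-γ + 1) := by
        rw [hcong, add_mul, div_mul_cancel₀ _ hne3]; ring
      linear_combination hc
    filter_upwards [stepA] with x hx
    rw [hx, hdval]
    field_simp
    ring
end

section
/- Let $c=\frac{1}{3(1-\sin(1/3))}$ and define $\hat\alpha_x=c\big[\cos\big(\frac{1-x}{3}\big)-\sin\big(\frac{x}{3}\big)\big]$ for $x\in[0,1]$. Then $\hat{\boldsymbol{\alpha}}$ satisfies the simple threshold graphon equilibrium equation $3\hat\alpha_x-\int_0^{1-x}\hat\alpha_y\,dy=1$ for all $x\in[0,1]$. -/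
open MeasureTheory

lemma key_deriv (y : ℝ) :
    HasDerivAt (fun y : ℝ => -3 * Real.sin ((1 - y) / 3) + 3 * Real.cos (y / 3))
      (Real.cos ((1 - y) / 3) - Real.sin (y / 3)) y := by
  have h1 : HasDerivAt (fun y : ℝ => (1 - y) / 3) (-(1/3)) y := by
    have := ((hasDerivAt_id y).const_sub 1).div_const 3
    exact this.congr_deriv (by norm_num)
  have h2 : HasDerivAt (fun y : ℝ => y / 3) (1/3) y := by
    simpa using (hasDerivAt_id y).div_const 3
  have hs := (h1.sin).const_mul (-3 : ℝ)
  have hc := (h2.cos).const_mul (3 : ℝ)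
  have := hs.add hc
  exact this.congr_deriv (by ring)

lemma key_int (x : ℝ) :
    (∫ y in (0:ℝ)..(1 - x), Real.cos ((1 - y) / 3) - Real.sin (y / 3))
      = (-3 * Real.sin (x / 3) + 3 * Real.cos ((1 - x) / 3))
        - (-3 * Real.sin (1/3) + 3) := by
  have h := intervalIntegral.integral_eq_sub_of_hasDerivAt
    (f := fun y : ℝ => -3 * Real.sin ((1 - y) / 3) + 3 * Real.cos (y / 3))
    (f' := fun y => Real.cos ((1 - y) / 3) - Real.sin (y / 3))
    (a := 0) (b := 1 - x)
    (fun y _ => key_deriv y)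
    (by
      apply Continuous.intervalIntegrable
      continuity)
  rw [h]
  norm_num

/-- The explicit profile solves the simple threshold graphon equilibrium equation
`3 α̂_x - ∫_0^{1-x} α̂_y dy = 1`. -/
theorem simple_threshold_graphon_nash :
    ∀ x ∈ Set.Icc (0:ℝ) 1,
      3 * ((1 / (3 * (1 - Real.sin (1 / 3)))) *
          (Real.cos ((1 - x) / 3) - Real.sin (x / 3))) -
        (∫ y in (0:ℝ)..(1 - x),
          (1 / (3 * (1 - Real.sin (1 / 3)))) *
            (Real.cos ((1 - y) / 3) - Real.sin (y / 3))) = 1 := by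
  intro x _
  rw [intervalIntegral.integral_const_mul, key_int x]
  have hs : Real.sin (1/3) < 1 := by
    have := Real.sin_lt (show (0:ℝ) < 1/3 by norm_num)
    linarith
  have hne : 1 - Real.sin (1/3) ≠ 0 := by linarith
  field_simp
  ring
end
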